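/- Let α and β be real numbers with 0 < α ≤ β ≤ 1. Then for every t ≥ 0, W(t) := −2α sinh((2−α)t) + 2(2−α) sinh(αt) − (2−α−β) sinh((α+β)t) + (α+β) sinh((2−α−β)t) − (β−α) sinh((2−β+α)t) + (2−β+α) sinh((β−α)t) ≤ 0. -/

import Mathlib

open Real

set_option maxHeartbeats 1000000

/-- Helper: if `f` has nonnegative derivative on `[a,b]`, then `f a ≤ f b`. -/
lemma my_mono_le (f f' : ℝ → ℝ) (hd : ∀ x, HasDerivAt f (f' x) x) {a b : ℝ} (hab : a ≤ b)
    (h0 : ∀ x, a < x → x < b → 0 ≤ f' x) : f a ≤ f b := by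
  have hdiff : Differentiable ℝ f := fun x => (hd x).differentiableAt
  have hm : MonotoneOn f (Set.Icc a b) :=
    monotoneOn_of_deriv_nonneg (convex_Icc a b) hdiff.continuous.continuousOn
      hdiff.differentiableOn
      (fun x hx => by
        rw [interior_Icc] at hx
        rw [(hd x).deriv]
        exact h0 x hx.1 hx.2)
  exact hm (Set.left_mem_Icc.2 hab) (Set.right_mem_Icc.2 hab) hab

/-- Helper: if `f` has nonpositive derivative on `[a,b]`, then `f b ≤ f a`. -/
lemma my_anti_le (f f' : ℝ → ℝ) (hd : ∀ x, HasDerivAt f (f' x) x) {a b : ℝ} (hab : a ≤ b)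
    (h0 : ∀ x, a < x → x < b → f' x ≤ 0) : f b ≤ f a := by
  have hdiff : Differentiable ℝ f := fun x => (hd x).differentiableAt
  have hm : AntitoneOn f (Set.Icc a b) :=
    antitoneOn_of_deriv_nonpos (convex_Icc a b) hdiff.continuous.continuousOn
      hdiff.differentiableOn
      (fun x hx => by
        rw [interior_Icc] at hx
        rw [(hd x).deriv]
        exact h0 x hx.1 hx.2)
  exact hm (Set.left_mem_Icc.2 hab) (Set.right_mem_Icc.2 hab) hab

/-- `sinh x ≤ x cosh x` for `x ≥ 0`. -/
lemma my_sinh_le_mul_cosh {x : ℝ} (hx : 0 ≤ x) : Real.sinh x ≤ x * Real.cosh x := by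
  have hd : ∀ y : ℝ, HasDerivAt (fun z : ℝ => z * Real.cosh z - Real.sinh z)
      (y * Real.sinh y) y := by
    intro y
    have h := ((hasDerivAt_id y).mul (Real.hasDerivAt_cosh y)).sub (Real.hasDerivAt_sinh y)
    refine h.congr_deriv ?_
    simp
  have := my_mono_le _ _ hd hx (fun z hz _ => mul_nonneg hz.le
    (Real.sinh_nonneg_iff.2 hz.le))
  simp only [Real.cosh_zero, Real.sinh_zero, mul_one, zero_mul, sub_zero] at this
  linarith

/-- Ratio lemma: `sinh` grows superlinearly: for `0 ≤ a ≤ b`, `b sinh a ≤ a sinh b`. -/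
lemma my_sinh_ratio {a b : ℝ} (ha : 0 ≤ a) (hab : a ≤ b) :
    b * Real.sinh a ≤ a * Real.sinh b := by
  have hd : ∀ x : ℝ, HasDerivAt (fun z : ℝ => a * Real.sinh z - z * Real.sinh a)
      (a * Real.cosh x - Real.sinh a) x := by
    intro x
    have h := ((Real.hasDerivAt_sinh x).const_mul a).sub
      ((hasDerivAt_id x).mul_const (Real.sinh a))
    refine h.congr_deriv ?_
    simp
  have key := my_mono_le _ _ hd hab (fun x hx _ => by
    have h1 : Real.cosh a ≤ Real.cosh x := by
      rw [Real.cosh_le_cosh, abs_of_nonneg ha, abs_of_nonneg (le_of_lt (lt_of_le_of_lt ha hx))]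
      exact hx.le
    have h2 := my_sinh_le_mul_cosh ha
    nlinarith [mul_le_mul_of_nonneg_left h1 ha])
  replace key : a * Real.sinh a - a * Real.sinh a ≤ a * Real.sinh b - b * Real.sinh a := key
  nlinarith [key]

/-- Scaled ratio lemma. -/
lemma my_sinh_ratio' {y u τ : ℝ} (hy : 0 ≤ y) (hyu : y ≤ u) (hτ : 0 ≤ τ) :
    u * Real.sinh (y * τ) ≤ y * Real.sinh (u * τ) := by
  rcases eq_or_lt_of_le hτ with h | h
  · rw [← h]; simp
  · have h1 := my_sinh_ratio (mul_nonneg hy h.le)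
      (mul_le_mul_of_nonneg_right hyu h.le)
    have h2 : (u * Real.sinh (y * τ)) * τ ≤ (y * Real.sinh (u * τ)) * τ := by nlinarith [h1]
    exact le_of_mul_le_mul_right h2 h

/-- The integrand `N'' - N`. -/
noncomputable def Ifun (α β τ : ℝ) : ℝ :=
  ((1 - α) ^ 2 - 1) * Real.sinh ((1 - α) * τ)
    + (α ^ 2 + (1 - β) ^ 2 - 1) * (Real.sinh (α * τ) * Real.cosh ((1 - β) * τ))
    + (2 * α * (1 - β)) * (Real.cosh (α * τ) * Real.sinh ((1 - β) * τ))

/-- The quantity `V = N' sinh - N cosh`, so that `W = 4 V`. -/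
noncomputable def Vfun (α β τ : ℝ) : ℝ :=
  ((1 - α) * Real.cosh ((1 - α) * τ) + α * (Real.cosh (α * τ) * Real.cosh ((1 - β) * τ))
      + (1 - β) * (Real.sinh (α * τ) * Real.sinh ((1 - β) * τ))) * Real.sinh τ
    - (Real.sinh ((1 - α) * τ) + Real.sinh (α * τ) * Real.cosh ((1 - β) * τ)) * Real.cosh τ

lemma Vfun_hasDerivAt (α β τ : ℝ) :
    HasDerivAt (Vfun α β) (Ifun α β τ * Real.sinh τ) τ := by
  have hA : HasDerivAt (fun x : ℝ => α * x) α τ := by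
    simpa using (hasDerivAt_id τ).const_mul α
  have hC : HasDerivAt (fun x : ℝ => (1 - α) * x) (1 - α) τ := by
    simpa using (hasDerivAt_id τ).const_mul (1 - α)
  have hS : HasDerivAt (fun x : ℝ => (1 - β) * x) (1 - β) τ := by
    simpa using (hasDerivAt_id τ).const_mul (1 - β)
  have hsA := hA.sinh
  have hcA := hA.cosh
  have hsC := hC.sinh
  have hcC := hC.cosh
  have hsS := hS.sinh
  have hcS := hS.cosh
  have h := ((((hcC.const_mul (1 - α)).add ((hcA.mul hcS).const_mul α)).add
      ((hsA.mul hsS).const_mul (1 - β))).mul (Real.hasDerivAt_sinh τ)).sub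
      ((hsC.add (hsA.mul hcS)).mul (Real.hasDerivAt_cosh τ))
  refine h.congr_deriv ?_
  simp only [Ifun, Pi.add_apply, Pi.mul_apply]
  ring

lemma Ifun_nonpos {α β : ℝ} (hα : 0 ≤ α) (hαβ : α ≤ β) (hβ : β ≤ 1) {τ : ℝ} (hτ : 0 ≤ τ) :
    Ifun α β τ ≤ 0 := by
  have hβ0 : 0 ≤ β := le_trans hα hαβ
  have e1 : Real.sinh ((1 + α - β) * τ)
      = Real.sinh (α * τ) * Real.cosh ((1 - β) * τ)
        + Real.cosh (α * τ) * Real.sinh ((1 - β) * τ) := by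
    rw [show (1 + α - β) * τ = α * τ + (1 - β) * τ by ring, Real.sinh_add]
  have e2 : Real.sinh ((1 - α - β) * τ)
      = Real.sinh ((1 - β) * τ) * Real.cosh (α * τ)
        - Real.cosh ((1 - β) * τ) * Real.sinh (α * τ) := by
    rw [show (1 - α - β) * τ = (1 - β) * τ - α * τ by ring, Real.sinh_sub]
  have key : 2 * (1 - (1 - α) ^ 2) * Real.sinh ((1 - α) * τ)
      + (1 - (1 + α - β) ^ 2) * Real.sinh ((1 + α - β) * τ)
      - (1 - (1 - α - β) ^ 2) * Real.sinh ((1 - α - β) * τ) = -2 * Ifun α β τ := by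
    simp only [Ifun]
    rw [e1, e2]
    ring
  have hc0 : 0 ≤ 1 - α := by linarith
  have hc1 : 0 ≤ 1 - (1 - α) ^ 2 := by nlinarith
  have hu0 : 0 ≤ 1 + α - β := by linarith
  have hu1 : 0 ≤ 1 - (1 + α - β) ^ 2 := by nlinarith
  have hsc : 0 ≤ Real.sinh ((1 - α) * τ) := Real.sinh_nonneg_iff.2 (mul_nonneg hc0 hτ)
  have hsu : 0 ≤ Real.sinh ((1 + α - β) * τ) := Real.sinh_nonneg_iff.2 (mul_nonneg hu0 hτ)
  have hgoal : 0 ≤ 2 * (1 - (1 - α) ^ 2) * Real.sinh ((1 - α) * τ)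
      + (1 - (1 + α - β) ^ 2) * Real.sinh ((1 + α - β) * τ)
      - (1 - (1 - α - β) ^ 2) * Real.sinh ((1 - α - β) * τ) := by
    rcases le_or_gt (1 - α - β) 0 with hy | hy
    · have hsy : Real.sinh ((1 - α - β) * τ) ≤ 0 :=
        Real.sinh_nonpos_iff.2 (mul_nonpos_of_nonpos_of_nonneg hy hτ)
      have hy1 : 0 ≤ 1 - (1 - α - β) ^ 2 := by nlinarith
      nlinarith [mul_nonneg hc1 hsc, mul_nonneg hu1 hsu, mul_nonneg hy1 (neg_nonneg.2 hsy)]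
    · have hsy : 0 ≤ Real.sinh ((1 - α - β) * τ) :=
        Real.sinh_nonneg_iff.2 (mul_nonneg hy.le hτ)
      have r1 : (1 - α) * Real.sinh ((1 - α - β) * τ)
          ≤ (1 - α - β) * Real.sinh ((1 - α) * τ) :=
        my_sinh_ratio' hy.le (by linarith) hτ
      have r2 : (1 + α - β) * Real.sinh ((1 - α - β) * τ)
          ≤ (1 - α - β) * Real.sinh ((1 + α - β) * τ) :=
        my_sinh_ratio' hy.le (by linarith) hτ
      have hb1 : 0 ≤ (1 - β) * β := mul_nonneg (by linarith) hβ0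
      have hkey2 : 0 ≤ 1 - α - (1 - β) ^ 2 := by nlinarith
      have hcub : 0 ≤ 2 * (1 - α) * (1 - (1 - α) ^ 2) + (1 + α - β) * (1 - (1 + α - β) ^ 2)
          - (1 - α - β) * (1 - (1 - α - β) ^ 2) := by nlinarith [mul_nonneg hα hkey2]
      have m1 := mul_le_mul_of_nonneg_left r1 (by linarith : (0:ℝ) ≤ 2 * (1 - (1 - α) ^ 2))
      have m2 := mul_le_mul_of_nonneg_left r2 hu1
      have m3 := mul_nonneg hcub hsy
      have hyT : 0 ≤ (1 - α - β) * (2 * (1 - (1 - α) ^ 2) * Real.sinh ((1 - α) * τ)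
          + (1 - (1 + α - β) ^ 2) * Real.sinh ((1 + α - β) * τ)
          - (1 - (1 - α - β) ^ 2) * Real.sinh ((1 - α - β) * τ)) := by linarith [m1, m2, m3]
      by_contra hcon
      push_neg at hcon
      nlinarith [mul_pos hy (neg_pos.2 hcon)]
  linarith

lemma Vfun_nonpos {α β : ℝ} (hα : 0 ≤ α) (hαβ : α ≤ β) (hβ : β ≤ 1) {t : ℝ} (ht : 0 ≤ t) :
    Vfun α β t ≤ 0 := by
  have h0 : Vfun α β 0 = 0 := by simp [Vfun]
  have := my_anti_le (Vfun α β) (fun τ => Ifun α β τ * Real.sinh τ)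
    (Vfun_hasDerivAt α β) ht
    (fun x hx _ => mul_nonpos_of_nonpos_of_nonneg
      (Ifun_nonpos hα hαβ hβ hx.le) (Real.sinh_nonneg_iff.2 hx.le))
  linarith [this]

/-- For `0 < α ≤ β ≤ 1` and `t ≥ 0`, the quantity `W(t) = 4 sinh²(t) Q'(t)` is
nonpositive. -/
theorem stmt_16 (α β : ℝ) (hα : 0 < α) (hαβ : α ≤ β) (hβ : β ≤ 1) (t : ℝ) (ht : 0 ≤ t) :
    -2 * α * sinh ((2 - α) * t) + 2 * (2 - α) * sinh (α * t)
      - (2 - α - β) * sinh ((α + β) * t) + (α + β) * sinh ((2 - α - β) * t)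
      - (β - α) * sinh ((2 - β + α) * t) + (2 - β + α) * sinh ((β - α) * t) ≤ 0 := by
  have hiden : -2 * α * sinh ((2 - α) * t) + 2 * (2 - α) * sinh (α * t)
      - (2 - α - β) * sinh ((α + β) * t) + (α + β) * sinh ((2 - α - β) * t)
      - (β - α) * sinh ((2 - β + α) * t) + (2 - β + α) * sinh ((β - α) * t)
      = 4 * Vfun α β t := by
    simp only [Vfun]
    rw [show (2 - α) * t = t + t - α * t by ring,
      show (α + β) * t = α * t + β * t by ring,
      show (2 - α - β) * t = t + t - α * t - β * t by ring,
      show (2 - β + α) * t = t + t - β * t + α * t by ring,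
      show (β - α) * t = β * t - α * t by ring,
      show (1 - α) * t = t - α * t by ring,
      show (1 - β) * t = t - β * t by ring]
    simp only [Real.sinh_eq, Real.cosh_eq, Real.exp_add, Real.exp_sub, Real.exp_neg]
    have h1 := Real.exp_ne_zero t
    have h2 := Real.exp_ne_zero (α * t)
    have h3 := Real.exp_ne_zero (β * t)
    field_simp
    ring
  rw [hiden]
  have := Vfun_nonpos hα.le hαβ hβ ht
  linarith
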